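/- For ε ∈ (0,π/4), the function v_ε on [0,π] equal to 0 on [0,ε²], log(x/ε²) on [ε²,ε], log(1/ε) on [ε,π-ε], log((π-x)/ε²) on [π-ε,π-ε²], and 0 on [π-ε²,π], satisfies ∫₀^π v_ε(x) sin(x) dx > (3π/8)·log(1/ε). -/

import Mathlib

open MeasureTheory Real intervalIntegral

/-- The piecewise log-plateau function `v_ε` on `[0, π]`. -/
noncomputable def vfam (ε x : ℝ) : ℝ :=
  if x ≤ ε ^ 2 then 0
  else if x ≤ ε then Real.log (x / ε ^ 2)
  else if x ≤ Real.pi - ε then Real.log (1 / ε)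
  else if x ≤ Real.pi - ε ^ 2 then Real.log ((Real.pi - x) / ε ^ 2)
  else 0

lemma vfam_nonneg {ε : ℝ} (hε : 0 < ε) (hε1 : ε < 1) (x : ℝ) : 0 ≤ vfam ε x := by
  unfold vfam
  split_ifs with h1 h2 h3 h4
  · exact le_rfl
  · apply Real.log_nonneg
    rw [le_div_iff₀ (by positivity)]
    nlinarith [not_le.mp h1]
  · apply Real.log_nonneg
    rw [le_div_iff₀ hε]
    linarith
  · apply Real.log_nonneg
    rw [le_div_iff₀ (by positivity)]
    nlinarith
  · exact le_rfl

lemma vfam_le {ε : ℝ} (hε : 0 < ε) (hε1 : ε < 1) (x : ℝ) :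
    vfam ε x ≤ Real.log (1 / ε) := by
  have hL : 0 ≤ Real.log (1 / ε) := Real.log_nonneg (by rw [le_div_iff₀ hε]; linarith)
  unfold vfam
  split_ifs with h1 h2 h3 h4
  · exact hL
  · apply Real.log_le_log (by rw [lt_div_iff₀ (by positivity)]; nlinarith [not_le.mp h1])
    rw [div_le_div_iff₀ (by positivity) hε]
    nlinarith
  · exact le_rfl
  · apply Real.log_le_log
    · rw [lt_div_iff₀ (by positivity)]
      nlinarith [not_le.mp h3]
    · rw [div_le_div_iff₀ (by positivity) hε]
      nlinarith [not_le.mp h3]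
  · exact hL

lemma vfam_measurable (ε : ℝ) : Measurable (vfam ε) := by
  unfold vfam
  apply Measurable.ite (measurableSet_le measurable_id measurable_const) measurable_const
  apply Measurable.ite (measurableSet_le measurable_id measurable_const)
  · exact Real.measurable_log.comp (measurable_id.div_const _)
  apply Measurable.ite (measurableSet_le measurable_id measurable_const) measurable_const
  apply Measurable.ite (measurableSet_le measurable_id measurable_const)
  · exact Real.measurable_log.comp ((measurable_const.sub measurable_id).div_const _)
  · exact measurable_const

/-- For `ε ∈ (0, π/4)`, `∫₀^π v_ε(x) sin x dx > (3π/8) log(1/ε)`. -/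
theorem stmt_3 (ε : ℝ) (hε : ε ∈ Set.Ioo (0 : ℝ) (Real.pi / 4)) :
    3 * Real.pi / 8 * Real.log (1 / ε) < ∫ x in (0:ℝ)..Real.pi, vfam ε x * Real.sin x := by
  obtain ⟨hε0, hε4⟩ := hε
  have hπ := Real.pi_gt_three
  have hπ' := Real.pi_lt_d2
  have hε1 : ε < 1 := by linarith
  have hεπ : ε < Real.pi - ε := by linarith
  have hεπ' : Real.pi - ε ≤ Real.pi := by linarith
  have hL : 0 < Real.log (1 / ε) := Real.log_pos (by rw [lt_div_iff₀ hε0]; linarith)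
  -- integrability
  have hm : Measurable fun x => vfam ε x * Real.sin x :=
    (vfam_measurable ε).mul Real.continuous_sin.measurable
  have hint : IntervalIntegrable (fun x => vfam ε x * Real.sin x) volume 0 Real.pi := by
    rw [intervalIntegrable_iff]
    apply Integrable.mono' (g := fun _ => Real.log (1 / ε))
    · exact (integrableOn_const_iff).mpr (Or.inr measure_Ioc_lt_top)
    · exact hm.aestronglyMeasurable
    · filter_upwards with x
      rw [Real.norm_eq_abs, abs_mul, abs_of_nonneg (vfam_nonneg hε0 hε1 x)]
      calc vfam ε x * |Real.sin x| ≤ Real.log (1 / ε) * 1 :=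
            mul_le_mul (vfam_le hε0 hε1 x) (Real.abs_sin_le_one x) (abs_nonneg _) hL.le
        _ = Real.log (1 / ε) := mul_one _
  have hsub1 : Set.uIcc 0 ε ⊆ Set.uIcc 0 Real.pi := by
    rw [Set.uIcc_of_le (by linarith : (0:ℝ) ≤ ε), Set.uIcc_of_le (by linarith : (0:ℝ) ≤ Real.pi)]
    exact Set.Icc_subset_Icc le_rfl (by linarith)
  have hsub2 : Set.uIcc ε (Real.pi - ε) ⊆ Set.uIcc 0 Real.pi := by
    rw [Set.uIcc_of_le hεπ.le, Set.uIcc_of_le (by linarith : (0:ℝ) ≤ Real.pi)]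
    exact Set.Icc_subset_Icc (by linarith) (by linarith)
  have hsub3 : Set.uIcc (Real.pi - ε) Real.pi ⊆ Set.uIcc 0 Real.pi := by
    rw [Set.uIcc_of_le hεπ', Set.uIcc_of_le (by linarith : (0:ℝ) ≤ Real.pi)]
    exact Set.Icc_subset_Icc (by linarith) le_rfl
  have hint1 := hint.mono_set hsub1
  have hint2 := hint.mono_set hsub2
  have hint3 := hint.mono_set hsub3
  -- split
  have hsplit : (∫ x in (0:ℝ)..Real.pi, vfam ε x * Real.sin x) =
      (∫ x in (0:ℝ)..ε, vfam ε x * Real.sin x)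
      + (∫ x in ε..(Real.pi - ε), vfam ε x * Real.sin x)
      + (∫ x in (Real.pi - ε)..Real.pi, vfam ε x * Real.sin x) := by
    rw [intervalIntegral.integral_add_adjacent_intervals hint1 hint2,
      intervalIntegral.integral_add_adjacent_intervals (hint1.trans hint2) hint3]
  -- nonnegativity of side pieces
  have hside1 : 0 ≤ ∫ x in (0:ℝ)..ε, vfam ε x * Real.sin x := by
    apply intervalIntegral.integral_nonneg (by linarith)
    intro x hx
    exact mul_nonneg (vfam_nonneg hε0 hε1 x)
      (Real.sin_nonneg_of_nonneg_of_le_pi hx.1 (by linarith [hx.2]))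
  have hside3 : 0 ≤ ∫ x in (Real.pi - ε)..Real.pi, vfam ε x * Real.sin x := by
    apply intervalIntegral.integral_nonneg (by linarith)
    intro x hx
    exact mul_nonneg (vfam_nonneg hε0 hε1 x)
      (Real.sin_nonneg_of_nonneg_of_le_pi (by linarith [hx.1]) hx.2)
  -- middle piece
  have hmid : (∫ x in ε..(Real.pi - ε), vfam ε x * Real.sin x) =
      2 * Real.cos ε * Real.log (1 / ε) := by
    have hcongr : (∫ x in ε..(Real.pi - ε), vfam ε x * Real.sin x)
        = ∫ x in ε..(Real.pi - ε), Real.log (1 / ε) * Real.sin x := by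
      apply intervalIntegral.integral_congr
      intro x hx
      rw [Set.uIcc_of_le hεπ.le] at hx
      obtain ⟨hx1, hx2⟩ := hx
      have hεsq : ε ^ 2 < ε := by nlinarith
      simp only [vfam]
      split_ifs with h1 h2
      · exfalso; linarith
      · have hxε : x = ε := le_antisymm h2 hx1
        subst hxε
        congr 1
        rw [sq, ← div_div, div_self hε0.ne']
      · rfl
    rw [hcongr, intervalIntegral.integral_const_mul, integral_sin, Real.cos_pi_sub]
    ring
  -- 3π/8 < 2 cos ε
  have hsqrt2 : (1.414 : ℝ) < Real.sqrt 2 := by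
    nlinarith [Real.sq_sqrt (by norm_num : (0:ℝ) ≤ 2), Real.sqrt_nonneg 2]
  have hcos : Real.sqrt 2 / 2 < Real.cos ε := by
    have := Real.cos_lt_cos_of_nonneg_of_le_pi hε0.le
      (by linarith : Real.pi / 4 ≤ Real.pi) hε4
    rwa [Real.cos_pi_div_four] at this
  have hfin : 3 * Real.pi / 8 * Real.log (1 / ε) < 2 * Real.cos ε * Real.log (1 / ε) := by
    nlinarith
  rw [hsplit]
  linarith [hmid, hside1, hside3, hfin]
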